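/- (Theorem 4: SGC convergence rate for strongly convex losses.) Let W ⊆ ℝ^ℓ be nonempty, closed and convex, and let Π : ℝ^ℓ → ℝ^ℓ satisfy Π(x) ∈ W and ‖Π(x) − w‖₂ ≤ ‖x − w‖₂ for all x ∈ ℝ^ℓ and all w ∈ W (the metric projection onto W). Let ℓ_1,…,ℓ_m : ℝ^ℓ → ℝ be convex and differentiable with ‖∇ℓ_i(β)‖₂ ≤ C for all β ∈ W and all i, and set L := Σ_{i=1}^m ℓ_i. Let β* ∈ W and λ > 0 satisfy ⟨∇L(β), β − β*⟩ ≥ λ·‖β − β*‖₂² for all β ∈ W (λ-strong convexity of L with respect to its constrained minimizer β*). Let T ≥ 1 and let B_{t,j} (t = 1,…,T, j = 1,…,n) be mutually independent {0,1}-valued random variables with P(B_{t,j} = 1) = 1−p. Starting from any β_0 ∈ W, define for t = 1,…,T: ĝ_t := Σ_{j=1}^n B_{t,j} · Σ_{i ∈ S_j} ∇ℓ_i(β_{t−1})/(d_i·(1−p)) and β_t := Π(β_{t−1} − ĝ_t/(λ·t)). Then E‖β_T − β*‖₂² ≤ (4/(λ²·T)) · m·C² · ( p/((1−p)·d_min)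 + (m−1)·p/(n·(1−p)) + m ), where d_min := min_i d_i. -/

import Mathlib

open MeasureTheory ProbabilityTheory Finset RealInnerProductSpace

/-- Scalar SGD recursion bound. -/
lemma sgc_aux_rec (T : ℕ) (e : ℕ → ℝ) (G : ℝ) (hG : 0 ≤ G)
    (hnn : ∀ t, 0 ≤ e t)
    (hstep : ∀ t, t < T → e (t+1) ≤ (1 - 2/((t:ℝ)+1)) * e t + G/((t:ℝ)+1)^2) :
    ∀ t, 1 ≤ t → t ≤ T → e t ≤ 4*G/(t:ℝ) := by
  intro t
  induction t with
  | zero => omega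
  | succ s ih =>
    intro _ hsT
    have hstep' := hstep s (by omega)
    rcases Nat.eq_zero_or_pos s with hs | hs
    · subst hs
      simp only [Nat.cast_zero] at hstep' ⊢
      norm_num at hstep' ⊢
      nlinarith [hnn 0, hnn 1]
    · have ihs := ih (by omega) (by omega)
      have hx1 : (1:ℝ) ≤ (s:ℝ) := by exact_mod_cast hs
      have hx0 : (0:ℝ) < (s:ℝ) := by linarith
      have hcoef : (0:ℝ) ≤ 1 - 2/((s:ℝ)+1) := by
        rw [sub_nonneg, div_le_one (by linarith)]; linarith
      have h1 : (1 - 2/((s:ℝ)+1)) * e s ≤ (1 - 2/((s:ℝ)+1)) * (4*G/(s:ℝ)) :=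
        mul_le_mul_of_nonneg_left ihs hcoef
      have h2 : (1 - 2/((s:ℝ)+1)) * (4*G/(s:ℝ)) + G/((s:ℝ)+1)^2 ≤ 4*G/((s:ℝ)+1) := by
        have key : 4*G/((s:ℝ)+1) - ((1 - 2/((s:ℝ)+1)) * (4*G/(s:ℝ)) + G/((s:ℝ)+1)^2)
            = G*(3*(s:ℝ)+4)/((s:ℝ)*((s:ℝ)+1)^2) := by
          field_simp
          ring
        have hpos : 0 ≤ G*(3*(s:ℝ)+4)/((s:ℝ)*((s:ℝ)+1)^2) := by positivity
        linarith
      calc e (s+1) ≤ (1 - 2/((s:ℝ)+1)) * e s + G/((s:ℝ)+1)^2 := hstep'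
        _ ≤ (1 - 2/((s:ℝ)+1)) * (4*G/(s:ℝ)) + G/((s:ℝ)+1)^2 := by linarith
        _ ≤ 4*G/((s:ℝ)+1) := h2
        _ = 4*G/(((s:ℕ)+1:ℕ):ℝ) := by push_cast; ring

/-- Double counting. -/
lemma sgc_double_count {M : Type*} [AddCommMonoid M] {m n : ℕ}
    (S : Fin n → Finset (Fin m)) (d : Fin m → ℕ)
    (hdeg : ∀ i, (Finset.univ.filter (fun j => i ∈ S j)).card = d i)
    (g : Fin m → M) :
    ∑ j, ∑ i ∈ S j, g i = ∑ i, d i • g i := by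
  classical
  have h1 : ∀ j : Fin n, ∑ i ∈ S j, g i = ∑ i : Fin m, if i ∈ S j then g i else 0 := by
    intro j
    rw [← Finset.sum_filter, Finset.filter_univ_mem]
  simp_rw [h1]
  rw [Finset.sum_comm]
  refine Finset.sum_congr rfl fun i _ => ?_
  rw [← Finset.sum_filter, Finset.sum_const, hdeg]
lemma sgc_gradient_sum {l : ℕ} {m : ℕ} (f : Fin m → EuclideanSpace ℝ (Fin l) → ℝ)
    (hdiff : ∀ i, Differentiable ℝ (f i)) (x : EuclideanSpace ℝ (Fin l)) :
    gradient (fun b => ∑ i, f i b) x = ∑ i, gradient (f i) x := by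
  unfold gradient
  rw [fderiv_fun_sum (fun i _ => (hdiff i).differentiableAt), map_sum]

lemma sgc_sqsum_bound {l : ℕ} (m n : ℕ) (hn : 1 ≤ n) (hm : 0 < m)
    (S : Fin n → Finset (Fin m)) (d : Fin m → ℕ) (hdpos : ∀ i, 0 < d i)
    (hdeg : ∀ i : Fin m, (Finset.univ.filter (fun j => i ∈ S j)).card = d i)
    (hpair : ∀ i i' : Fin m, i ≠ i' →
      (Finset.univ.filter (fun j => i ∈ S j ∧ i' ∈ S j)).card * n = d i * d i')
    (p : ℝ) (hp1 : p < 1)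
    (C : ℝ) (hC0 : 0 ≤ C) (dmin : ℝ) (hdminle : ∀ i, dmin ≤ (d i:ℝ)) (hdminpos : 0 < dmin)
    (a : Fin m → EuclideanSpace ℝ (Fin l)) (ha : ∀ i, ‖a i‖ ≤ C) :
    ∑ j, ‖∑ i ∈ S j, ((d i : ℝ) * (1 - p))⁻¹ • a i‖^2 ≤
      ((1-p)⁻¹)^2 * ((m:ℝ)*C^2/dmin + (m:ℝ)*((m:ℝ)-1)*C^2/(n:ℝ)) := by
  classical
  have hp' : (0:ℝ) < 1 - p := by linarith
  set c : Fin m → ℝ := fun i => ((d i : ℝ) * (1 - p))⁻¹ with hc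
  have hcpos : ∀ i, 0 < c i := by
    intro i
    have : (0:ℝ) < (d i : ℝ) := by exact_mod_cast hdpos i
    positivity
  set Q : Fin m → Fin m → ℝ := fun i i' => c i * c i' * ⟪a i, a i'⟫ with hQ
  set N : Fin m → Fin m → ℕ :=
    fun i i' => (Finset.univ.filter (fun j => i ∈ S j ∧ i' ∈ S j)).card with hN
  -- step 1: rewrite LHS as double sum
  have step1 : ∑ j, ‖∑ i ∈ S j, c i • a i‖^2 = ∑ i, ∑ i', (N i i' : ℝ) * Q i i' := by
    have h1 : ∀ j : Fin n, ‖∑ i ∈ S j, c i • a i‖^2 = ∑ i ∈ S j, ∑ i' ∈ S j, Q i i' := by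
      intro j
      rw [← real_inner_self_eq_norm_sq, sum_inner]
      refine Finset.sum_congr rfl fun i _ => ?_
      rw [inner_sum]
      refine Finset.sum_congr rfl fun i' _ => ?_
      rw [real_inner_smul_left, real_inner_smul_right, hQ]
      ring
    simp_rw [h1]
    have e1 : ∀ (j : Fin n) (g : Fin m → ℝ), ∑ i ∈ S j, g i = ∑ i, if i ∈ S j then g i else 0 := by
      intro j g
      rw [← Finset.sum_filter, Finset.filter_univ_mem]
    have h2 : ∀ j : Fin n, ∑ i ∈ S j, ∑ i' ∈ S j, Q i i'
        = ∑ i : Fin m, ∑ i' : Fin m, if i ∈ S j ∧ i' ∈ S j then Q i i' else 0 := by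
      intro j
      rw [e1 j]
      refine Finset.sum_congr rfl fun i _ => ?_
      by_cases h : i ∈ S j
      · simp only [h, if_true, true_and]
        rw [e1 j]
      · simp [h]
    simp_rw [h2]
    rw [Finset.sum_comm]
    refine Finset.sum_congr rfl fun i _ => ?_
    rw [Finset.sum_comm]
    refine Finset.sum_congr rfl fun i' _ => ?_
    rw [← Finset.sum_filter, Finset.sum_const, hN, nsmul_eq_mul]
  rw [step1]
  -- step 2: termwise bounds
  have hQle : ∀ i i', Q i i' ≤ c i * c i' * C^2 := by
    intro i i'
    have hinner : ⟪a i, a i'⟫ ≤ C^2 := by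
      calc ⟪a i, a i'⟫ ≤ ‖a i‖ * ‖a i'‖ := real_inner_le_norm _ _
        _ ≤ C * C := mul_le_mul (ha i) (ha i') (norm_nonneg _) hC0
        _ = C^2 := (sq C).symm
    exact mul_le_mul_of_nonneg_left hinner (mul_nonneg (hcpos i).le (hcpos i').le)
  have hNdiag : ∀ i, N i i = d i := by
    intro i
    rw [hN]
    simp only [and_self]
    exact hdeg i
  have hNoff : ∀ i i', i ≠ i' → (N i i' : ℝ) = (d i : ℝ) * (d i' : ℝ) / (n : ℝ) := by
    intro i i' hii
    have := hpair i i' hii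
    have hn0 : (0:ℝ) < (n:ℝ) := by exact_mod_cast hn
    field_simp
    exact_mod_cast this
  -- inner bound for fixed i
  have hinner_bound : ∀ i : Fin m, ∑ i', (N i i' : ℝ) * Q i i'
      ≤ ((1-p)⁻¹)^2 * (C^2/dmin + ((m:ℝ)-1)*C^2/(n:ℝ)) := by
    intro i
    have hdi : (0:ℝ) < (d i : ℝ) := by exact_mod_cast hdpos i
    have hdine : ((d i : ℝ)) ≠ 0 := ne_of_gt hdi
    have hpne : (1-p) ≠ 0 := ne_of_gt hp'
    rw [← Finset.add_sum_erase _ _ (Finset.mem_univ i)]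
    have hdiag : (N i i : ℝ) * Q i i ≤ ((1-p)⁻¹)^2 * (C^2/dmin) := by
      have h1 : (N i i : ℝ) * Q i i ≤ (d i : ℝ) * (c i * c i * C^2) := by
        rw [hNdiag i]
        exact mul_le_mul_of_nonneg_left (hQle i i) (by positivity)
      have h2 : (d i : ℝ) * (c i * c i * C^2) = ((1-p)⁻¹)^2 * (C^2/(d i:ℝ)) := by
        rw [hc]
        field_simp
      have h3 : ((1-p)⁻¹)^2 * (C^2/(d i:ℝ)) ≤ ((1-p)⁻¹)^2 * (C^2/dmin) := by
        have : C^2/(d i:ℝ) ≤ C^2/dmin :=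
          div_le_div_of_nonneg_left (by positivity) hdminpos (hdminle i)
        exact mul_le_mul_of_nonneg_left this (by positivity)
      linarith
    have hoff : ∑ i' ∈ Finset.univ.erase i, (N i i' : ℝ) * Q i i'
        ≤ ((m:ℝ)-1) * (((1-p)⁻¹)^2 * (C^2/(n:ℝ))) := by
      have hterm : ∀ i' ∈ Finset.univ.erase i, (N i i' : ℝ) * Q i i'
          ≤ ((1-p)⁻¹)^2 * (C^2/(n:ℝ)) := by
        intro i' hi'
        have hii : i' ≠ i := Finset.ne_of_mem_erase hi'
        have hdi' : (0:ℝ) < (d i' : ℝ) := by exact_mod_cast hdpos i'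
        have hdine' : ((d i' : ℝ)) ≠ 0 := ne_of_gt hdi'
        have h1 : (N i i' : ℝ) * Q i i' ≤ (N i i' : ℝ) * (c i * c i' * C^2) :=
          mul_le_mul_of_nonneg_left (hQle i i') (by positivity)
        have h2 : (N i i' : ℝ) * (c i * c i' * C^2) = ((1-p)⁻¹)^2 * (C^2/(n:ℝ)) := by
          rw [hNoff i i' (Ne.symm hii), hc]
          have hn0 : (0:ℝ) < (n:ℝ) := by exact_mod_cast hn
          field_simp
        linarith
      calc ∑ i' ∈ Finset.univ.erase i, (N i i' : ℝ) * Q i i'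
          ≤ ∑ _i' ∈ Finset.univ.erase i, ((1-p)⁻¹)^2 * (C^2/(n:ℝ)) :=
            Finset.sum_le_sum hterm
        _ = ((Finset.univ.erase i).card : ℝ) * (((1-p)⁻¹)^2 * (C^2/(n:ℝ))) := by
            rw [Finset.sum_const, nsmul_eq_mul]
        _ = ((m:ℝ)-1) * (((1-p)⁻¹)^2 * (C^2/(n:ℝ))) := by
            rw [Finset.card_erase_of_mem (Finset.mem_univ i), Finset.card_univ, Fintype.card_fin]
            congr 1
            have : (1:ℕ) ≤ m := hm
            push_cast [this]
            ring
    have hgoal : ((1-p)⁻¹)^2 * (C^2/dmin) + ((m:ℝ)-1) * (((1-p)⁻¹)^2 * (C^2/(n:ℝ)))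
        = ((1-p)⁻¹)^2 * (C^2/dmin + ((m:ℝ)-1)*C^2/(n:ℝ)) := by ring
    linarith
  calc ∑ i, ∑ i', (N i i' : ℝ) * Q i i'
      ≤ ∑ _i : Fin m, ((1-p)⁻¹)^2 * (C^2/dmin + ((m:ℝ)-1)*C^2/(n:ℝ)) :=
        Finset.sum_le_sum (fun i _ => hinner_bound i)
    _ = (m:ℝ) * (((1-p)⁻¹)^2 * (C^2/dmin + ((m:ℝ)-1)*C^2/(n:ℝ))) := by
        rw [Finset.sum_const, nsmul_eq_mul, Finset.card_univ, Fintype.card_fin]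
    _ = ((1-p)⁻¹)^2 * ((m:ℝ)*C^2/dmin + (m:ℝ)*((m:ℝ)-1)*C^2/(n:ℝ)) := by ring
lemma sgc_proj_ineq {l : ℕ} (W : Set (EuclideanSpace ℝ (Fin l)))
    (proj : EuclideanSpace ℝ (Fin l) → EuclideanSpace ℝ (Fin l))
    (hproj : ∀ x, ∀ w ∈ W, ‖proj x - w‖ ≤ ‖x - w‖)
    (w : EuclideanSpace ℝ (Fin l)) (hw : w ∈ W)
    (x g : EuclideanSpace ℝ (Fin l)) (η : ℝ) :
    ‖proj (x - η • g) - w‖^2 ≤ ‖x - w‖^2 - 2*η*⟪g, x - w⟫ + η^2*‖g‖^2 := by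
  have h1 : ‖proj (x - η • g) - w‖ ≤ ‖x - η • g - w‖ := hproj _ w hw
  have h2 : ‖proj (x - η • g) - w‖^2 ≤ ‖x - η • g - w‖^2 :=
    pow_le_pow_left₀ (norm_nonneg _) h1 2
  have h3 : x - η • g - w = (x - w) - η • g := by abel
  have h4 : ‖(x - w) - η • g‖^2 = ‖x - w‖^2 - 2*⟪x - w, η • g⟫ + ‖η • g‖^2 := by
    rw [norm_sub_sq_real]
  have h5 : ⟪x - w, η • g⟫ = η * ⟪g, x - w⟫ := by
    rw [real_inner_smul_right, real_inner_comm]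
  have h6 : ‖η • g‖^2 = η^2 * ‖g‖^2 := by
    rw [norm_smul, mul_pow, Real.norm_eq_abs, sq_abs]
  calc ‖proj (x - η • g) - w‖^2 ≤ ‖x - η • g - w‖^2 := h2
    _ = ‖(x - w) - η • g‖^2 := by rw [h3]
    _ = ‖x - w‖^2 - 2*η*⟪g, x - w⟫ + η^2*‖g‖^2 := by rw [h4, h5, h6]; ring

lemma sgc_double_count' {M : Type*} [AddCommMonoid M] [Module ℝ M] {m n : ℕ}
    (S : Fin n → Finset (Fin m)) (d : Fin m → ℕ) (hdpos : ∀ i, 0 < d i)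
    (hdeg : ∀ i, (Finset.univ.filter (fun j => i ∈ S j)).card = d i)
    (hdc : ∀ (g : Fin m → M), ∑ j, ∑ i ∈ S j, g i = ∑ i, d i • g i)
    (p : ℝ) (hp1 : p < 1) (a : Fin m → M) :
    ∑ j, ∑ i ∈ S j, ((d i : ℝ) * (1 - p))⁻¹ • a i = (1-p)⁻¹ • ∑ i, a i := by
  rw [hdc (fun i => ((d i : ℝ) * (1 - p))⁻¹ • a i), Finset.smul_sum]
  refine Finset.sum_congr rfl fun i _ => ?_
  have hdi : (0:ℝ) < (d i : ℝ) := by exact_mod_cast hdpos i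
  have hp' : (0:ℝ) < 1 - p := by linarith
  rw [← Nat.cast_smul_eq_nsmul ℝ, smul_smul]
  congr 1
  field_simp
set_option maxHeartbeats 1000000 in
/-- **Theorem 4: SGC convergence rate for strongly convex losses.**
For a λ-strongly convex loss `L = Σ_i ℓ_i` with bounded partial gradients on the constraint
set `W`, projected SGC with step sizes `1/(λ t)` satisfies
`E‖β_T − β*‖₂² ≤ (4/(λ² T)) m C² (p/((1−p) d_min) + (m−1) p/(n(1−p)) + m)`. -/
theorem sgc_strongly_convex_rate
    (m n l T : ℕ) (hn : 1 ≤ n) (hm : 0 < m) (hT : 1 ≤ T)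
    (S : Fin n → Finset (Fin m)) (d : Fin m → ℕ) (hdpos : ∀ i, 0 < d i)
    (hdeg : ∀ i : Fin m, (Finset.univ.filter (fun j => i ∈ S j)).card = d i)
    (hpair : ∀ i i' : Fin m, i ≠ i' →
      (Finset.univ.filter (fun j => i ∈ S j ∧ i' ∈ S j)).card * n = d i * d i')
    (p : ℝ) (hp0 : 0 ≤ p) (hp1 : p < 1)
    (W : Set (EuclideanSpace ℝ (Fin l)))
    (hWne : W.Nonempty) (hWclosed : IsClosed W) (hWconv : Convex ℝ W)
    (proj : EuclideanSpace ℝ (Fin l) → EuclideanSpace ℝ (Fin l))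
    (hprojW : ∀ x, proj x ∈ W)
    (hproj : ∀ x, ∀ w ∈ W, ‖proj x - w‖ ≤ ‖x - w‖)
    (f : Fin m → EuclideanSpace ℝ (Fin l) → ℝ)
    (hconv : ∀ i, ConvexOn ℝ Set.univ (f i))
    (hdiff : ∀ i, Differentiable ℝ (f i))
    (C : ℝ) (hC : ∀ i, ∀ β ∈ W, ‖gradient (f i) β‖ ≤ C)
    (βstar : EuclideanSpace ℝ (Fin l)) (hβstarW : βstar ∈ W)
    (lam : ℝ) (hlam : 0 < lam)
    (hstrong : ∀ β ∈ W,
      ⟪gradient (fun b => ∑ i, f i b) β, β - βstar⟫ ≥ lam * ‖β - βstar‖ ^ 2)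
    (Ω : Type*) [MeasureSpace Ω] [IsProbabilityMeasure (ℙ : Measure Ω)]
    (B : Fin T × Fin n → Ω → ℝ)
    (hB01 : ∀ tj ω, B tj ω = 0 ∨ B tj ω = 1)
    (hBmeas : ∀ tj, Measurable (B tj))
    (hBp : ∀ tj, (ℙ : Measure Ω) {ω | B tj ω = 1} = ENNReal.ofReal (1 - p))
    (hBindep : iIndepFun B ℙ)
    (β0 : EuclideanSpace ℝ (Fin l)) (hβ0W : β0 ∈ W)
    (β : ℕ → Ω → EuclideanSpace ℝ (Fin l))
    (ghat : Fin T → Ω → EuclideanSpace ℝ (Fin l))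
    (hβ0 : ∀ ω, β 0 ω = β0)
    (hghat : ∀ t : Fin T, ∀ ω, ghat t ω =
      ∑ j, B (t, j) ω • ∑ i ∈ S j, ((d i : ℝ) * (1 - p))⁻¹ • gradient (f i) (β t ω))
    (hrec : ∀ t : Fin T, ∀ ω,
      β (t + 1) ω = proj (β t ω - (1 / (lam * ((t : ℕ) + 1))) • ghat t ω))
    (dmin : ℝ)
    (hdmin : dmin = Finset.univ.inf' ⟨⟨0, hm⟩, Finset.mem_univ _⟩ (fun i : Fin m => (d i : ℝ))) :
    ∫ ω, ‖β T ω - βstar‖ ^ 2 ≤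
      4 / (lam ^ 2 * T) *
        (m * C ^ 2 * (p / ((1 - p) * dmin) + (m - 1) * p / (n * (1 - p)) + m)) := by
  classical
  have hp' : (0:ℝ) < 1 - p := by linarith
  have hpne : (1 - p) ≠ 0 := ne_of_gt hp'
  obtain ⟨w0, hw0⟩ := hWne
  have hC0 : 0 ≤ C := le_trans (norm_nonneg _) (hC ⟨0, hm⟩ w0 hw0)
  have hdminle : ∀ i, dmin ≤ (d i : ℝ) := by
    intro i; rw [hdmin]; exact Finset.inf'_le _ (Finset.mem_univ i)
  have hdminpos : 0 < dmin := by
    rw [hdmin]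
    apply lt_of_lt_of_le zero_lt_one
    apply Finset.le_inf'
    intro i _
    exact_mod_cast hdpos i
  have hn0 : (0:ℝ) < (n:ℝ) := by exact_mod_cast hn
  -- the Bernoulli bits
  set bb : Ω → (Fin T × Fin n → Bool) := fun ω k => if B k ω = 1 then true else false with hbbdef
  have hbbmeas : Measurable bb := by
    apply measurable_pi_lambda
    intro k
    exact Measurable.ite (hBmeas k (measurableSet_singleton 1)) measurable_const measurable_const
  have hBbool : ∀ k ω, B k ω = if bb ω k then (1:ℝ) else 0 := by
    intro k ω
    rcases hB01 k ω with h | h <;> simp [hbbdef, h]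
  -- integrability of anything that factors through the bits
  have hInt : ∀ F : (Fin T × Fin n → Bool) → ℝ, Integrable (fun ω => F (bb ω)) := by
    intro F
    have hmeas : Measurable fun ω => F (bb ω) := (measurable_of_countable F).comp hbbmeas
    obtain ⟨v0⟩ : Nonempty (Fin T × Fin n → Bool) := inferInstance
    set M := Finset.univ.sup' ⟨v0, Finset.mem_univ v0⟩ (fun v => |F v|) with hM
    refine (integrable_const M).mono' hmeas.aestronglyMeasurable (ae_of_all _ fun ω => ?_)
    rw [Real.norm_eq_abs]
    exact Finset.le_sup' (fun v => |F v|) (Finset.mem_univ (bb ω))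
  have hIntB : ∀ k, Integrable (B k) := by
    intro k
    refine (integrable_const (1:ℝ)).mono' (hBmeas k).aestronglyMeasurable
      (ae_of_all _ fun ω => ?_)
    rcases hB01 k ω with h | h <;> simp [h]
  have hEB : ∀ k, ∫ ω, B k ω = 1 - p := by
    intro k
    have hrepr : (fun ω => B k ω) = Set.indicator (B k ⁻¹' {1}) (fun _ => (1:ℝ)) := by
      funext ω
      rcases hB01 k ω with h | h
      · rw [Set.indicator_of_notMem]
        · exact h
        · simp [Set.mem_preimage, h]
      · rw [Set.indicator_of_mem]
        · exact h
        · simp [Set.mem_preimage, h]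
    rw [hrepr, integral_indicator_const (1:ℝ) (hBmeas k (measurableSet_singleton 1))]
    have : (B k ⁻¹' {1}) = {ω | B k ω = 1} := by ext ω; simp [Set.mem_preimage]
    rw [this, measureReal_def, hBp k, smul_eq_mul, mul_one, ENNReal.toReal_ofReal hp'.le]
  -- key independence lemma 1
  have key1 : ∀ (t : Fin T) (j : Fin n) (F : (Fin T × Fin n → Bool) → ℝ),
      (∀ v w, (∀ k : Fin T × Fin n, (k.1 : ℕ) < (t : ℕ) → v k = w k) → F v = F w) →
      ∫ ω, B (t, j) ω * F (bb ω) = (1 - p) * ∫ ω, F (bb ω) := by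
    intro t j F hdep
    set S₂ : Finset (Fin T × Fin n) := Finset.univ.filter (fun k => (k.1 : ℕ) < (t : ℕ)) with hS₂
    have hdisj : Disjoint ({(t, j)} : Finset (Fin T × Fin n)) S₂ := by
      simp only [Finset.disjoint_left, Finset.mem_singleton, hS₂, Finset.mem_filter]
      rintro k rfl
      simp
    have hind := hBindep.indepFun_finset {(t, j)} S₂ hdisj hBmeas
    set φ : ({x : Fin T × Fin n // x ∈ ({(t, j)} : Finset (Fin T × Fin n))} → ℝ) → ℝ :=
      fun v => v (Subtype.mk (t, j) (Finset.mem_singleton_self _)) with hφ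
    have hφm : Measurable φ := measurable_pi_apply _
    set ext2 : ({x : Fin T × Fin n // x ∈ S₂} → ℝ) → (Fin T × Fin n → Bool) :=
      fun v k => if h : k ∈ S₂ then (if v (Subtype.mk k h) = 1 then true else false)
        else false with hext2
    have hext2m : Measurable ext2 := by
      apply measurable_pi_lambda
      intro k
      by_cases h : k ∈ S₂
      · simp only [hext2, h, dif_pos]
        exact Measurable.ite ((measurable_pi_apply _) (measurableSet_singleton 1))
          measurable_const measurable_const
      · simp only [hext2, h, dif_neg, not_false_iff]
        exact measurable_const
    have hψm : Measurable (F ∘ ext2) := (measurable_of_countable F).comp hext2m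
    have hcomp := hind.comp hφm hψm
    have heq1 : (φ ∘ fun ω (i : ({(t, j)} : Finset (Fin T × Fin n))) => B i ω) = B (t, j) := rfl
    have heq2 : ((F ∘ ext2) ∘ fun ω (i : (S₂ : Finset (Fin T × Fin n))) => B i ω)
        = fun ω => F (bb ω) := by
      funext ω
      simp only [Function.comp_apply]
      apply hdep
      intro k hk
      have hkS : k ∈ S₂ := Finset.mem_filter.2 ⟨Finset.mem_univ _, hk⟩
      simp only [hext2, hkS, dif_pos, hbbdef]
    rw [heq1, heq2] at hcomp
    have := hcomp.integral_mul_eq_mul_integral (hIntB (t, j)).aestronglyMeasurable (hInt F).aestronglyMeasurable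
    rw [hEB (t, j)] at this
    exact this
  -- key independence lemma 2
  have key2 : ∀ (t : Fin T) (j j' : Fin n), j ≠ j' → ∀ F : (Fin T × Fin n → Bool) → ℝ,
      (∀ v w, (∀ k : Fin T × Fin n, (k.1 : ℕ) < (t : ℕ) → v k = w k) → F v = F w) →
      ∫ ω, B (t, j) ω * B (t, j') ω * F (bb ω) = (1 - p)^2 * ∫ ω, F (bb ω) := by
    intro t j j' hjj F hdep
    set S₂ : Finset (Fin T × Fin n) := Finset.univ.filter (fun k => (k.1 : ℕ) < (t : ℕ)) with hS₂
    have hdisj : Disjoint ({(t, j), (t, j')} : Finset (Fin T × Fin n)) S₂ := by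
      simp only [Finset.disjoint_left, Finset.mem_insert, Finset.mem_singleton, hS₂,
        Finset.mem_filter]
      rintro k (rfl | rfl) <;> simp
    have hind := hBindep.indepFun_finset {(t, j), (t, j')} S₂ hdisj hBmeas
    set φ : ({x : Fin T × Fin n // x ∈ ({(t, j), (t, j')} : Finset (Fin T × Fin n))} → ℝ) → ℝ :=
      fun v => v (Subtype.mk (t, j) (Finset.mem_insert_self _ _)) *
        v (Subtype.mk (t, j') (Finset.mem_insert_of_mem (Finset.mem_singleton_self _))) with hφ
    have hφm : Measurable φ := (measurable_pi_apply _).mul (measurable_pi_apply _)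
    set ext2 : ({x : Fin T × Fin n // x ∈ S₂} → ℝ) → (Fin T × Fin n → Bool) :=
      fun v k => if h : k ∈ S₂ then (if v (Subtype.mk k h) = 1 then true else false)
        else false with hext2
    have hext2m : Measurable ext2 := by
      apply measurable_pi_lambda
      intro k
      by_cases h : k ∈ S₂
      · simp only [hext2, h, dif_pos]
        exact Measurable.ite ((measurable_pi_apply _) (measurableSet_singleton 1))
          measurable_const measurable_const
      · simp only [hext2, h, dif_neg, not_false_iff]
        exact measurable_const
    have hψm : Measurable (F ∘ ext2) := (measurable_of_countable F).comp hext2m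
    have hcomp := hind.comp hφm hψm
    have heq1 : (φ ∘ fun ω (i : ({(t, j), (t, j')} : Finset (Fin T × Fin n))) => B i ω)
        = fun ω => B (t, j) ω * B (t, j') ω := rfl
    have heq2 : ((F ∘ ext2) ∘ fun ω (i : (S₂ : Finset (Fin T × Fin n))) => B i ω)
        = fun ω => F (bb ω) := by
      funext ω
      simp only [Function.comp_apply]
      apply hdep
      intro k hk
      have hkS : k ∈ S₂ := Finset.mem_filter.2 ⟨Finset.mem_univ _, hk⟩
      simp only [hext2, hkS, dif_pos, hbbdef]
    rw [heq1, heq2] at hcomp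
    have hIntBB : Integrable (fun ω => B (t, j) ω * B (t, j') ω) := by
      refine (integrable_const (1:ℝ)).mono'
        (((hBmeas _).mul (hBmeas _)).aestronglyMeasurable) (ae_of_all _ fun ω => ?_)
      rcases hB01 (t, j) ω with h | h <;> rcases hB01 (t, j') ω with h' | h' <;>
        simp [h, h']
    have hmul := hcomp.integral_mul_eq_mul_integral hIntBB.aestronglyMeasurable (hInt F).aestronglyMeasurable
    have hpairind : IndepFun (B (t, j)) (B (t, j')) ℙ := by
      apply hBindep.indepFun
      simp [Prod.ext_iff, hjj]
    have hBB : ∫ ω, B (t, j) ω * B (t, j') ω = (1 - p)^2 := by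
      have := hpairind.integral_mul_eq_mul_integral (hIntB _).aestronglyMeasurable (hIntB _).aestronglyMeasurable
      rw [hEB, hEB] at this
      have h2 : (fun ω => B (t, j) ω * B (t, j') ω) = B (t, j) * B (t, j') := rfl
      rw [h2, this]
      ring
    have h3 : (fun ω => B (t, j) ω * B (t, j') ω * F (bb ω))
        = (fun ω => B (t, j) ω * B (t, j') ω) * (fun ω => F (bb ω)) := rfl
    rw [show (∫ ω, B (t, j) ω * B (t, j') ω * F (bb ω))
        = ∫ ω, ((fun ω => B (t, j) ω * B (t, j') ω) * fun ω => F (bb ω)) ω from rfl]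
    rw [hmul, hBB]
  -- representation of the process as a function of the bits
  have βrep : ∀ t : ℕ, t ≤ T → ∃ F : (Fin T × Fin n → Bool) → EuclideanSpace ℝ (Fin l),
      (∀ ω, β t ω = F (bb ω)) ∧
      (∀ v w, (∀ k : Fin T × Fin n, (k.1 : ℕ) < t → v k = w k) → F v = F w) ∧
      (∀ v, F v ∈ W) := by
    intro t
    induction t with
    | zero =>
      intro _
      exact ⟨fun _ => β0, fun ω => hβ0 ω, fun _ _ _ => rfl, fun _ => hβ0W⟩
    | succ s ih =>
      intro hsT
      obtain ⟨F, hF, hdep, hFW⟩ := ih (by omega)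
      have hsT' : s < T := hsT
      refine ⟨fun v => proj (F v - (1 / (lam * ((s:ℝ) + 1))) •
        ∑ j, (if v (⟨s, hsT'⟩, j) then (1:ℝ) else 0) •
          ∑ i ∈ S j, ((d i : ℝ) * (1 - p))⁻¹ • gradient (f i) (F v)), ?_, ?_, ?_⟩
      · intro ω
        have h1 : β (s+1) ω = proj (β s ω - (1 / (lam * ((s:ℝ) + 1))) • ghat ⟨s, hsT'⟩ ω) :=
          hrec ⟨s, hsT'⟩ ω
        have h2 : ghat ⟨s, hsT'⟩ ω =
            ∑ j, B (⟨s, hsT'⟩, j) ω • ∑ i ∈ S j, ((d i : ℝ) * (1 - p))⁻¹ •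
              gradient (f i) (β s ω) := hghat ⟨s, hsT'⟩ ω
        dsimp only
        rw [h1, h2, hF ω]
        have hsum : ∀ x : EuclideanSpace ℝ (Fin l),
            (∑ j, B (⟨s, hsT'⟩, j) ω • ∑ i ∈ S j, ((d i : ℝ) * (1 - p))⁻¹ • gradient (f i) x)
            = ∑ j, (if bb ω (⟨s, hsT'⟩, j) then (1:ℝ) else 0) •
                ∑ i ∈ S j, ((d i : ℝ) * (1 - p))⁻¹ • gradient (f i) x := by
          intro x
          refine Finset.sum_congr rfl fun j _ => ?_
          rw [hBbool (⟨s, hsT'⟩, j) ω]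
        rw [hsum]
      · intro v w hvw
        have hFvw : F v = F w := hdep v w (fun k hk => hvw k (by omega))
        have hsame : ∀ j : Fin n, v (⟨s, hsT'⟩, j) = w (⟨s, hsT'⟩, j) := by
          intro j
          exact hvw (⟨s, hsT'⟩, j) (by simp)
        dsimp only
        rw [hFvw]
        have hsum : (∑ j, (if v (⟨s, hsT'⟩, j) then (1:ℝ) else 0) •
              ∑ i ∈ S j, ((d i : ℝ) * (1 - p))⁻¹ • gradient (f i) (F w))
            = ∑ j, (if w (⟨s, hsT'⟩, j) then (1:ℝ) else 0) •
              ∑ i ∈ S j, ((d i : ℝ) * (1 - p))⁻¹ • gradient (f i) (F w) := by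
          refine Finset.sum_congr rfl fun j _ => ?_
          rw [hsame j]
        rw [hsum]
      · intro v; exact hprojW _
  -- global quantities
  have hdc : ∀ (g : Fin m → EuclideanSpace ℝ (Fin l)),
      ∑ j, ∑ i ∈ S j, g i = ∑ i, d i • g i := sgc_double_count S d hdeg
  set vv : Fin n → EuclideanSpace ℝ (Fin l) → EuclideanSpace ℝ (Fin l) :=
    fun j x => ∑ i ∈ S j, ((d i : ℝ) * (1 - p))⁻¹ • gradient (f i) x with hvv
  have hvsum : ∀ x, ∑ j, vv j x = (1-p)⁻¹ • ∑ i, gradient (f i) x := by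
    intro x
    simp only [hvv]
    exact sgc_double_count' S d hdpos hdeg hdc p hp1 (fun i => gradient (f i) x)
  set G2 : ℝ := ↑m * C ^ 2 * (p / ((1 - p) * dmin) + (↑m - 1) * p / (↑n * (1 - p)) + ↑m)
    with hG2def
  have hm1 : (1:ℝ) ≤ (m:ℝ) := by exact_mod_cast hm
  have hG2nn : 0 ≤ G2 := by
    rw [hG2def]
    have h1 : 0 ≤ p / ((1 - p) * dmin) := div_nonneg hp0 (mul_nonneg hp'.le hdminpos.le)
    have h2 : 0 ≤ ((m:ℝ) - 1) * p / (↑n * (1 - p)) :=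
      div_nonneg (mul_nonneg (by linarith) hp0) (mul_nonneg hn0.le hp'.le)
    have h3 : (0:ℝ) ≤ (m:ℝ) := by linarith
    positivity
  have hnorm1 : ∀ x ∈ W, ‖∑ j, vv j x‖^2 ≤ ((1-p)⁻¹)^2 * ((m:ℝ)*C)^2 := by
    intro x hx
    rw [hvsum x, norm_smul, mul_pow, Real.norm_eq_abs, sq_abs]
    have hns : ‖∑ i, gradient (f i) x‖ ≤ (m:ℝ)*C := by
      calc ‖∑ i, gradient (f i) x‖ ≤ ∑ i, ‖gradient (f i) x‖ := norm_sum_le _ _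
        _ ≤ ∑ _i : Fin m, C := Finset.sum_le_sum (fun i _ => hC i x hx)
        _ = (m:ℝ)*C := by rw [Finset.sum_const, nsmul_eq_mul, Finset.card_univ, Fintype.card_fin]
    have := pow_le_pow_left₀ (norm_nonneg _) hns 2
    have hinv : (0:ℝ) ≤ ((1-p)⁻¹)^2 := by positivity
    exact mul_le_mul_of_nonneg_left this hinv
  have hnorm2 : ∀ x ∈ W, ∑ j, ‖vv j x‖^2
      ≤ ((1-p)⁻¹)^2 * ((m:ℝ)*C^2/dmin + (m:ℝ)*((m:ℝ)-1)*C^2/(n:ℝ)) := by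
    intro x hx
    simp only [hvv]
    exact sgc_sqsum_bound m n hn hm S d hdpos hdeg hpair p hp1 C hC0 dmin hdminle hdminpos
      (fun i => gradient (f i) x) (fun i => hC i x hx)
  have hstrongpt : ∀ x ∈ W, ⟪∑ i, gradient (f i) x, x - βstar⟫ ≥ lam * ‖x - βstar‖^2 := by
    intro x hx
    have := hstrong x hx
    rwa [sgc_gradient_sum f hdiff x] at this
  set e := fun t : ℕ => ∫ ω, ‖β t ω - βstar‖^2 with he
  have henn : ∀ t, 0 ≤ e t := fun t => integral_nonneg (fun ω => by positivity)
  have hstep : ∀ t, t < T → e (t+1) ≤ (1 - 2/((t:ℝ)+1)) * e t + (G2/lam^2)/((t:ℝ)+1)^2 := by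
    intro t htT
    obtain ⟨F, hF, hdep, hFW⟩ := βrep t (le_of_lt htT)
    obtain ⟨F1, hF1, _, _⟩ := βrep (t+1) htT
    set τ : Fin T := ⟨t, htT⟩ with hτ
    set η : ℝ := 1/(lam*((t:ℝ)+1)) with hη
    have hηpos : 0 < η := by rw [hη]; positivity
    set Fj : Fin n → (Fin T × Fin n → Bool) → ℝ := fun j v => ⟪vv j (F v), F v - βstar⟫ with hFj
    set Fjj : Fin n → Fin n → (Fin T × Fin n → Bool) → ℝ :=
      fun j j' v => ⟪vv j (F v), vv j' (F v)⟫ with hFjj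
    set GG : (Fin T × Fin n → Bool) → EuclideanSpace ℝ (Fin l) :=
      fun v => ∑ j, (if v (τ, j) then (1:ℝ) else 0) • vv j (F v) with hGG
    have hGGbb : ∀ ω, ghat τ ω = GG (bb ω) := by
      intro ω
      have h2 : ghat τ ω = ∑ j, B (τ, j) ω • ∑ i ∈ S j, ((d i : ℝ) * (1 - p))⁻¹ •
          gradient (f i) (β t ω) := hghat τ ω
      rw [h2]
      simp only [hGG, hvv]
      refine Finset.sum_congr rfl fun j _ => ?_
      rw [hBbool (τ, j) ω, hF ω]
    set FA : (Fin T × Fin n → Bool) → ℝ := fun v => ‖F v - βstar‖^2 with hFA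
    set FX : (Fin T × Fin n → Bool) → ℝ := fun v => ⟪GG v, F v - βstar⟫ with hFX
    set FY : (Fin T × Fin n → Bool) → ℝ := fun v => ‖GG v‖^2 with hFY
    have hetarep : e t = ∫ ω, FA (bb ω) := by
      simp only [he, hFA]
      congr 1
      funext ω
      rw [hF ω]
    -- step (a): one-step integral inequality
    have hIA : e (t+1) ≤ (e t) - 2*η*(∫ ω, FX (bb ω)) + η^2*(∫ ω, FY (bb ω)) := by
      have hpw : ∀ ω, ‖β (t+1) ω - βstar‖^2 ≤ FA (bb ω) - 2*η*FX (bb ω) + η^2*FY (bb ω) := by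
        intro ω
        have h1 : β (t+1) ω = proj (β t ω - η • ghat τ ω) := hrec τ ω
        have h2 := sgc_proj_ineq W proj hproj βstar hβstarW (β t ω) (ghat τ ω) η
        simp only [hFA, hFX, hFY, ← hF ω, ← hGGbb ω]
        rw [h1]
        exact h2
      have heq : ∫ ω, (FA (bb ω) - 2*η*FX (bb ω) + η^2*FY (bb ω))
          = (∫ ω, FA (bb ω)) - 2*η*(∫ ω, FX (bb ω)) + η^2*(∫ ω, FY (bb ω)) := by
        have i3 : Integrable (fun ω => FA (bb ω)) := hInt FA
        have i4 : Integrable (fun ω => 2*η*FX (bb ω)) := (hInt FX).const_mul (2*η)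
        have i1 : Integrable (fun ω => FA (bb ω) - 2*η*FX (bb ω)) := i3.sub i4
        have i2 : Integrable (fun ω => η^2*FY (bb ω)) := (hInt FY).const_mul (η^2)
        rw [integral_add i1 i2, integral_sub i3 i4, integral_const_mul, integral_const_mul]
      have hmono : ∫ ω, ‖β (t+1) ω - βstar‖^2
          ≤ ∫ ω, (FA (bb ω) - 2*η*FX (bb ω) + η^2*FY (bb ω)) := by
        apply integral_mono ?_ ?_ hpw
        · have hrwint : (fun ω => ‖β (t+1) ω - βstar‖^2)
              = fun ω => ‖F1 (bb ω) - βstar‖^2 := funext fun ω => by rw [hF1 ω]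
          rw [hrwint]
          exact hInt (fun v => ‖F1 v - βstar‖^2)
        · have i3 : Integrable (fun ω => FA (bb ω)) := hInt FA
          have i4 : Integrable (fun ω => 2*η*FX (bb ω)) := (hInt FX).const_mul (2*η)
          have i2 : Integrable (fun ω => η^2*FY (bb ω)) := (hInt FY).const_mul (η^2)
          exact (i3.sub i4).add i2
      have he1 : e (t+1) = ∫ ω, ‖β (t+1) ω - βstar‖^2 := rfl
      rw [he1, hetarep]
      linarith
    -- step (b): lower bound for the drift term
    have hFXge : lam * e t ≤ ∫ ω, FX (bb ω) := by
      have hdepj : ∀ (j : Fin n) (v w : Fin T × Fin n → Bool),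
          (∀ k : Fin T × Fin n, (k.1:ℕ) < (τ:ℕ) → v k = w k) → Fj j v = Fj j w := by
        intro j v w h
        simp only [hFj]
        rw [hdep v w h]
      have hFXdecomp : (fun ω => FX (bb ω))
          = fun ω => ∑ j, B (τ, j) ω * Fj j (bb ω) := by
        funext ω
        simp only [hFX, hGG, hFj]
        rw [sum_inner]
        refine Finset.sum_congr rfl fun j _ => ?_
        rw [real_inner_smul_left, hBbool (τ, j) ω]
      have hintj : ∀ j : Fin n, Integrable (fun ω => B (τ, j) ω * Fj j (bb ω)) := by
        intro j
        have hr : (fun ω => B (τ, j) ω * Fj j (bb ω))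
            = fun ω => (fun v => (if v (τ, j) then (1:ℝ) else 0) * Fj j v) (bb ω) := by
          funext ω
          rw [hBbool (τ, j) ω]
        rw [hr]
        exact hInt (fun v => (if v (τ, j) then (1:ℝ) else 0) * Fj j v)
      have hIX1 : ∫ ω, FX (bb ω) = ∑ j, ∫ ω, B (τ, j) ω * Fj j (bb ω) := by
        rw [hFXdecomp]
        exact integral_finset_sum _ (fun j _ => hintj j)
      have hIX2 : ∫ ω, FX (bb ω) = (1-p) * ∑ j, ∫ ω, Fj j (bb ω) := by
        rw [hIX1, Finset.mul_sum]
        exact Finset.sum_congr rfl fun j _ => key1 τ j (Fj j) (hdepj j)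
      have hIX3 : ∑ j, ∫ ω, Fj j (bb ω) = ∫ ω, ∑ j, Fj j (bb ω) :=
        (integral_finset_sum _ (fun j _ => hInt (Fj j))).symm
      have hFjsum : ∀ v, ∑ j, Fj j v
          = (1-p)⁻¹ * ⟪∑ i, gradient (f i) (F v), F v - βstar⟫ := by
        intro v
        simp only [hFj]
        rw [← sum_inner, hvsum, real_inner_smul_left]
      have hIX4 : ∫ ω, ∑ j, Fj j (bb ω)
          = (1-p)⁻¹ * ∫ ω, ⟪∑ i, gradient (f i) (F (bb ω)), F (bb ω) - βstar⟫ := by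
        have hr : (fun ω => ∑ j, Fj j (bb ω)) = fun ω =>
            (1-p)⁻¹ * ⟪∑ i, gradient (f i) (F (bb ω)), F (bb ω) - βstar⟫ := by
          funext ω
          exact hFjsum (bb ω)
        rw [hr, integral_const_mul]
      have hinnge : lam * e t
          ≤ ∫ ω, ⟪∑ i, gradient (f i) (F (bb ω)), F (bb ω) - βstar⟫ := by
        have hptw : ∀ ω, lam * ‖F (bb ω) - βstar‖^2
            ≤ ⟪∑ i, gradient (f i) (F (bb ω)), F (bb ω) - βstar⟫ :=
          fun ω => hstrongpt (F (bb ω)) (hFW (bb ω))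
        have h1 : ∫ ω, lam * ‖F (bb ω) - βstar‖^2
            ≤ ∫ ω, ⟪∑ i, gradient (f i) (F (bb ω)), F (bb ω) - βstar⟫ := by
          apply integral_mono ?_ ?_ hptw
          · exact hInt (fun v => lam * ‖F v - βstar‖^2)
          · exact hInt (fun v => ⟪∑ i, gradient (f i) (F v), F v - βstar⟫)
        have h2 : ∫ ω, lam * ‖F (bb ω) - βstar‖^2 = lam * e t := by
          rw [integral_const_mul, hetarep]
        linarith
      rw [hIX2, hIX3, hIX4, ← mul_assoc, mul_inv_cancel₀ hpne, one_mul]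
      exact hinnge
    -- step (c): upper bound for the second moment
    have hFYle : ∫ ω, FY (bb ω) ≤ G2 := by
      have hdepjj : ∀ (j j' : Fin n) (v w : Fin T × Fin n → Bool),
          (∀ k : Fin T × Fin n, (k.1:ℕ) < (τ:ℕ) → v k = w k) → Fjj j j' v = Fjj j j' w := by
        intro j j' v w h
        simp only [hFjj]
        rw [hdep v w h]
      have hFYdecomp : (fun ω => FY (bb ω))
          = fun ω => ∑ j, ∑ j', B (τ, j) ω * B (τ, j') ω * Fjj j j' (bb ω) := by
        funext ω
        simp only [hFY, hGG, hFjj]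
        rw [← real_inner_self_eq_norm_sq, sum_inner]
        refine Finset.sum_congr rfl fun j _ => ?_
        rw [inner_sum]
        refine Finset.sum_congr rfl fun j' _ => ?_
        rw [real_inner_smul_left, real_inner_smul_right, hBbool (τ, j) ω, hBbool (τ, j') ω]
        ring
      have hintjj : ∀ j j' : Fin n,
          Integrable (fun ω => B (τ, j) ω * B (τ, j') ω * Fjj j j' (bb ω)) := by
        intro j j'
        have hr : (fun ω => B (τ, j) ω * B (τ, j') ω * Fjj j j' (bb ω))
            = fun ω => (fun v => (if v (τ, j) then (1:ℝ) else 0) *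
                (if v (τ, j') then (1:ℝ) else 0) * Fjj j j' v) (bb ω) := by
          funext ω
          rw [hBbool (τ, j) ω, hBbool (τ, j') ω]
        rw [hr]
        exact hInt (fun v => (if v (τ, j) then (1:ℝ) else 0) *
          (if v (τ, j') then (1:ℝ) else 0) * Fjj j j' v)
      have hintrow : ∀ j : Fin n,
          Integrable (fun ω => ∑ j', B (τ, j) ω * B (τ, j') ω * Fjj j j' (bb ω)) := by
        intro j
        have hr : (fun ω => ∑ j', B (τ, j) ω * B (τ, j') ω * Fjj j j' (bb ω))
            = fun ω => (fun v => ∑ j', (if v (τ, j) then (1:ℝ) else 0) *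
                (if v (τ, j') then (1:ℝ) else 0) * Fjj j j' v) (bb ω) := by
          funext ω
          refine Finset.sum_congr rfl fun j' _ => ?_
          rw [hBbool (τ, j) ω, hBbool (τ, j') ω]
        rw [hr]
        exact hInt (fun v => ∑ j', (if v (τ, j) then (1:ℝ) else 0) *
          (if v (τ, j') then (1:ℝ) else 0) * Fjj j j' v)
      have hIY1 : ∫ ω, FY (bb ω)
          = ∑ j, ∑ j', ∫ ω, B (τ, j) ω * B (τ, j') ω * Fjj j j' (bb ω) := by
        rw [hFYdecomp, integral_finset_sum _ (fun j _ => hintrow j)]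
        exact Finset.sum_congr rfl fun j _ =>
          integral_finset_sum _ (fun j' _ => hintjj j j')
      have hterm : ∀ j j' : Fin n, ∫ ω, B (τ, j) ω * B (τ, j') ω * Fjj j j' (bb ω)
          = (1-p)^2 * (∫ ω, Fjj j j' (bb ω))
            + (if j' = j then (p*(1-p)) * ∫ ω, Fjj j j (bb ω) else 0) := by
        intro j j'
        by_cases hjj : j' = j
        · subst hjj
          have hBsq : (fun ω => B (τ, j') ω * B (τ, j') ω * Fjj j' j' (bb ω))
              = fun ω => B (τ, j') ω * Fjj j' j' (bb ω) := by
            funext ω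
            rcases hB01 (τ, j') ω with h | h <;> rw [h] <;> ring
          rw [hBsq, key1 τ j' (Fjj j' j') (hdepjj j' j'), if_pos rfl]
          generalize (∫ ω, Fjj j' j' (bb ω)) = I
          ring
        · rw [key2 τ j j' (fun h => hjj h.symm) (Fjj j j') (hdepjj j j'), if_neg hjj]
          ring
      have hIY2 : ∫ ω, FY (bb ω)
          = (1-p)^2 * (∑ j, ∑ j', ∫ ω, Fjj j j' (bb ω))
            + (p*(1-p)) * (∑ j, ∫ ω, Fjj j j (bb ω)) := by
        rw [hIY1]
        have hrow : ∀ j : Fin n, ∑ j', ∫ ω, B (τ, j) ω * B (τ, j') ω * Fjj j j' (bb ω)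
            = (1-p)^2 * (∑ j', ∫ ω, Fjj j j' (bb ω)) + (p*(1-p)) * (∫ ω, Fjj j j (bb ω)) := by
          intro j
          rw [Finset.sum_congr rfl (fun j' _ => hterm j j')]
          rw [Finset.sum_add_distrib]
          rw [Finset.sum_ite_eq' Finset.univ j
              (fun _ => (p*(1-p)) * ∫ ω, Fjj j j (bb ω)),
            if_pos (Finset.mem_univ j), ← Finset.mul_sum]
        rw [Finset.sum_congr rfl (fun j _ => hrow j)]
        rw [Finset.sum_add_distrib]
        rw [← Finset.mul_sum, ← Finset.mul_sum]
      -- bound the two pieces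
      have hsum1 : ∑ j, ∑ j', ∫ ω, Fjj j j' (bb ω) ≤ ((1-p)⁻¹)^2 * ((m:ℝ)*C)^2 := by
        have h1 : ∀ j : Fin n, ∑ j', ∫ ω, Fjj j j' (bb ω) = ∫ ω, ∑ j', Fjj j j' (bb ω) :=
          fun j => (integral_finset_sum _ (fun j' _ => hInt (Fjj j j'))).symm
        rw [Finset.sum_congr rfl (fun j _ => h1 j),
          ← integral_finset_sum _ (fun j _ => hInt (fun v => ∑ j', Fjj j j' v))]
        have hpt : ∀ ω, ∑ j, ∑ j', Fjj j j' (bb ω) ≤ ((1-p)⁻¹)^2 * ((m:ℝ)*C)^2 := by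
          intro ω
          have hexp : ∑ j, ∑ j', Fjj j j' (bb ω) = ‖∑ j, vv j (F (bb ω))‖^2 := by
            simp only [hFjj]
            rw [← real_inner_self_eq_norm_sq, sum_inner]
            exact Finset.sum_congr rfl fun j _ => (inner_sum _ _ _).symm
          rw [hexp]
          exact hnorm1 (F (bb ω)) (hFW (bb ω))
        calc ∫ ω, ∑ j, ∑ j', Fjj j j' (bb ω)
            ≤ ∫ _ω, ((1-p)⁻¹)^2 * ((m:ℝ)*C)^2 := by
              apply integral_mono ?_ (integrable_const _) hpt
              exact hInt (fun v => ∑ j, ∑ j', Fjj j j' v)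
          _ = ((1-p)⁻¹)^2 * ((m:ℝ)*C)^2 := by
              rw [integral_const, measureReal_def, measure_univ, ENNReal.toReal_one, one_smul]
      have hsum2 : ∑ j, ∫ ω, Fjj j j (bb ω)
          ≤ ((1-p)⁻¹)^2 * ((m:ℝ)*C^2/dmin + (m:ℝ)*((m:ℝ)-1)*C^2/(n:ℝ)) := by
        rw [← integral_finset_sum _ (fun j _ => hInt (Fjj j j))]
        have hpt : ∀ ω, ∑ j, Fjj j j (bb ω)
            ≤ ((1-p)⁻¹)^2 * ((m:ℝ)*C^2/dmin + (m:ℝ)*((m:ℝ)-1)*C^2/(n:ℝ)) := by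
          intro ω
          have hexp : ∑ j, Fjj j j (bb ω) = ∑ j, ‖vv j (F (bb ω))‖^2 := by
            simp only [hFjj]
            exact Finset.sum_congr rfl fun j _ => real_inner_self_eq_norm_sq _
          rw [hexp]
          exact hnorm2 (F (bb ω)) (hFW (bb ω))
        calc ∫ ω, ∑ j, Fjj j j (bb ω)
            ≤ ∫ _ω, ((1-p)⁻¹)^2 * ((m:ℝ)*C^2/dmin + (m:ℝ)*((m:ℝ)-1)*C^2/(n:ℝ)) := by
              apply integral_mono ?_ (integrable_const _) hpt
              exact hInt (fun v => ∑ j, Fjj j j v)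
          _ = ((1-p)⁻¹)^2 * ((m:ℝ)*C^2/dmin + (m:ℝ)*((m:ℝ)-1)*C^2/(n:ℝ)) := by
              rw [integral_const, measureReal_def, measure_univ, ENNReal.toReal_one, one_smul]
      have hG2eq : (1-p)^2 * (((1-p)⁻¹)^2 * ((m:ℝ)*C)^2)
          + (p*(1-p)) * (((1-p)⁻¹)^2 * ((m:ℝ)*C^2/dmin + (m:ℝ)*((m:ℝ)-1)*C^2/(n:ℝ)))
          = G2 := by
        rw [hG2def]
        have hdne : dmin ≠ 0 := ne_of_gt hdminpos
        have hnne : (n:ℝ) ≠ 0 := ne_of_gt hn0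
        field_simp
        ring
      rw [hIY2, ← hG2eq]
      have hc1 : (0:ℝ) ≤ (1-p)^2 := sq_nonneg _
      have hc2 : (0:ℝ) ≤ p*(1-p) := mul_nonneg hp0 hp'.le
      have := mul_le_mul_of_nonneg_left hsum1 hc1
      have := mul_le_mul_of_nonneg_left hsum2 hc2
      linarith
    have htne : ((t:ℝ)+1) ≠ 0 := by positivity
    have h2eta : 2*η*lam = 2/((t:ℝ)+1) := by
      rw [hη]
      field_simp
    have hgen2 : ∀ A u x : ℝ, u ≠ 0 → x ≠ 0 → (1/(u*x))^2 * A = (A/u^2)/x^2 := by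
      intro A u x hu hx
      field_simp
    have hetasq : η^2*G2 = (G2/lam^2)/((t:ℝ)+1)^2 := by
      rw [hη]
      exact hgen2 G2 lam ((t:ℝ)+1) (ne_of_gt hlam) htne
    have hIX : -(2*η*(∫ ω, FX (bb ω))) ≤ -(2*η*(lam * e t)) := by
      have := mul_le_mul_of_nonneg_left hFXge (by positivity : (0:ℝ) ≤ 2*η)
      linarith
    have hIY : η^2*(∫ ω, FY (bb ω)) ≤ η^2*G2 :=
      mul_le_mul_of_nonneg_left hFYle (by positivity)
    calc e (t+1) ≤ (e t) - 2*η*(∫ ω, FX (bb ω)) + η^2*(∫ ω, FY (bb ω)) := hIA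
      _ ≤ (e t) - 2*η*(lam * e t) + η^2*G2 := by linarith
      _ = (1 - 2*η*lam) * e t + η^2*G2 := by ring
      _ = (1 - 2/((t:ℝ)+1)) * e t + (G2/lam^2)/((t:ℝ)+1)^2 := by rw [h2eta, hetasq]
  have hTpos : (0:ℝ) < (T:ℝ) := by exact_mod_cast hT
  have hfin := sgc_aux_rec T e (G2/lam^2) (div_nonneg hG2nn (by positivity)) henn hstep
    T hT le_rfl
  have hgen3 : ∀ A u x : ℝ, u ≠ 0 → x ≠ 0 → 4*(A/u^2)/x = 4/(u^2*x)*A := by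
    intro A u x hu hx
    field_simp
  have hrw : 4*(G2/lam^2)/(T:ℝ) = 4 / (lam ^ 2 * ↑T) * G2 :=
    hgen3 G2 lam (T:ℝ) (ne_of_gt hlam) (ne_of_gt hTpos)
  have hfinal : e T ≤ 4 / (lam ^ 2 * ↑T) * G2 := by rw [← hrw]; exact hfin
  exact hfinal
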